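/- Let β₁ ≤ β₂ be positive reals, A finite nonempty, and Q : A → ℝ. Define the Boltzmann policy π_β(a) = exp(β·Q(a)) / ∑_{a'} exp(β·Q(a')). Then the expected value ∑_a π_β(a)·Q(a) is nondecreasing in β: ∑_a π_{β₁}(a)Q(a) ≤ ∑_a π_{β₂}(a)Q(a), and as β → ∞, ∑_a π_β(a)Q(a) → max_a Q(a). -/

import Mathlib

theorem boltzmann_value_monotone_and_limit (A : Type*) [Fintype A] [Nonempty A]
    (Q : A → ℝ) (β₁ β₂ : ℝ) (hβ₁ : 0 < β₁) (hβ : β₁ ≤ β₂) :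
    (∑ a, (Real.exp (β₁ * Q a) / ∑ a', Real.exp (β₁ * Q a')) * Q a) ≤
      (∑ a, (Real.exp (β₂ * Q a) / ∑ a', Real.exp (β₂ * Q a')) * Q a) ∧
    Filter.Tendsto
      (fun β : ℝ => ∑ a, (Real.exp (β * Q a) / ∑ a', Real.exp (β * Q a')) * Q a)
      Filter.atTop (nhds (⨆ a, Q a)) := by
  obtain ⟨a₀, ha₀⟩ := Finite.exists_max Q
  set M := Q a₀ with hM
  have hS : ∀ β : ℝ, 0 < ∑ a', Real.exp (β * Q a') := fun β =>
    Finset.sum_pos (fun a _ => Real.exp_pos _) Finset.univ_nonempty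
  -- rewrite the sums as quotients
  have hfrac : ∀ β : ℝ,
      (∑ a, (Real.exp (β * Q a) / ∑ a', Real.exp (β * Q a')) * Q a)
        = (∑ a, Real.exp (β * Q a) * Q a) / ∑ a', Real.exp (β * Q a') := by
    intro β
    rw [Finset.sum_div]
    exact Finset.sum_congr rfl fun a _ => by rw [div_mul_eq_mul_div]
  constructor
  · -- monotonicity
    rw [hfrac β₁, hfrac β₂, div_le_div_iff₀ (hS β₁) (hS β₂)]
    set e₁ : A → ℝ := fun a => Real.exp (β₁ * Q a) with he₁
    set e₂ : A → ℝ := fun a => Real.exp (β₂ * Q a) with he₂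
    have key : 0 ≤ ∑ a, ∑ b, e₁ a * e₂ b * (Q b - Q a) := by
      have h2 : (2:ℝ) * (∑ a, ∑ b, e₁ a * e₂ b * (Q b - Q a))
          = ∑ a, ∑ b, (e₁ a * e₂ b * (Q b - Q a) + e₁ b * e₂ a * (Q a - Q b)) := by
        rw [two_mul]
        nth_rewrite 2 [Finset.sum_comm]
        rw [← Finset.sum_add_distrib]
        exact Finset.sum_congr rfl fun a _ => (Finset.sum_add_distrib).symm
      have hterm : ∀ a b : A,
          0 ≤ e₁ a * e₂ b * (Q b - Q a) + e₁ b * e₂ a * (Q a - Q b) := by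
        intro a b
        have hfac : e₁ a * e₂ b * (Q b - Q a) + e₁ b * e₂ a * (Q a - Q b)
            = (Real.exp (β₁ * Q a + β₂ * Q b) - Real.exp (β₁ * Q b + β₂ * Q a))
              * (Q b - Q a) := by
          simp only [he₁, he₂, Real.exp_add]; ring
        rw [hfac]
        rcases le_total (Q a) (Q b) with h | h
        · apply mul_nonneg _ (by linarith)
          rw [sub_nonneg]
          apply Real.exp_le_exp.mpr
          nlinarith
        · have hle : Real.exp (β₁ * Q a + β₂ * Q b) ≤ Real.exp (β₁ * Q b + β₂ * Q a) :=
            Real.exp_le_exp.mpr (by nlinarith)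
          nlinarith
      have hsum : 0 ≤ ∑ a, ∑ b, (e₁ a * e₂ b * (Q b - Q a) + e₁ b * e₂ a * (Q a - Q b)) :=
        Finset.sum_nonneg fun a _ => Finset.sum_nonneg fun b _ => hterm a b
      linarith [h2 ▸ hsum]
    have expand : ∑ a, ∑ b, e₁ a * e₂ b * (Q b - Q a)
        = (∑ a, e₁ a) * (∑ a, e₂ a * Q a) - (∑ a, e₁ a * Q a) * (∑ a, e₂ a) := by
      rw [Finset.sum_mul_sum, Finset.sum_mul_sum, ← Finset.sum_sub_distrib]
      refine Finset.sum_congr rfl fun a _ => ?_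
      rw [← Finset.sum_sub_distrib]
      exact Finset.sum_congr rfl fun b _ => by ring
    rw [expand] at key
    linarith
  · -- limit
    have hlim : ∀ a : A, Filter.Tendsto (fun β : ℝ => Real.exp (β * (Q a - M)))
        Filter.atTop (nhds (if Q a = M then 1 else 0)) := by
      intro a
      by_cases h : Q a = M
      · simp [h]
      · have hlt : Q a - M < 0 := sub_neg.mpr (lt_of_le_of_ne (ha₀ a) h)
        simp only [h, if_false]
        exact Real.tendsto_exp_atBot.comp (Filter.tendsto_id.atTop_mul_const_of_neg hlt)
    have hnum : Filter.Tendsto (fun β : ℝ => ∑ a, Real.exp (β * (Q a - M)) * Q a)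
        Filter.atTop (nhds (∑ a, (if Q a = M then (1:ℝ) else 0) * Q a)) :=
      tendsto_finset_sum _ fun a _ => (hlim a).mul_const _
    have hden : Filter.Tendsto (fun β : ℝ => ∑ a, Real.exp (β * (Q a - M)))
        Filter.atTop (nhds (∑ a, if Q a = M then (1:ℝ) else 0)) :=
      tendsto_finset_sum _ fun a _ => hlim a
    have hn : 0 < ∑ a, (if Q a = M then (1:ℝ) else 0) := by
      apply Finset.sum_pos' (fun a _ => by positivity)
      exact ⟨a₀, Finset.mem_univ a₀, by show (0:ℝ) < if Q a₀ = M then 1 else 0; rw [if_pos rfl]; exact one_pos⟩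
    have hratio := hnum.div hden hn.ne'
    have hval : (∑ a, (if Q a = M then (1:ℝ) else 0) * Q a)
        / (∑ a, if Q a = M then (1:ℝ) else 0) = M := by
      have h1 : ∑ a, (if Q a = M then (1:ℝ) else 0) * Q a
          = (∑ a, if Q a = M then (1:ℝ) else 0) * M := by
        rw [Finset.sum_mul]
        refine Finset.sum_congr rfl fun a _ => ?_
        by_cases h : Q a = M <;> simp [h]
      rw [h1, mul_comm, mul_div_assoc, div_self hn.ne', mul_one]
    have hsup : (⨆ a, Q a) = M :=
      le_antisymm (ciSup_le ha₀) (le_ciSup (Finite.bddAbove_range Q) a₀)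
    have hfun : ∀ β : ℝ,
        (∑ a, Real.exp (β * (Q a - M)) * Q a) / (∑ a, Real.exp (β * (Q a - M)))
          = ∑ a, (Real.exp (β * Q a) / ∑ a', Real.exp (β * Q a')) * Q a := by
      intro β
      rw [hfrac β]
      have he : ∀ a, Real.exp (β * (Q a - M)) = Real.exp (β * Q a) * Real.exp (-(β * M)) := by
        intro a; rw [← Real.exp_add]; ring_nf
      simp_rw [he, mul_right_comm]
      rw [← Finset.sum_mul, ← Finset.sum_mul, mul_div_mul_right _ _ (Real.exp_pos (-(β*M))).ne']
    rw [hsup]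
    rw [hval] at hratio
    exact hratio.congr hfun
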